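/- Let G(t) = (e^(wT(t)) - 1)/w in Q[w][[t]], where T(t) is the tree function satisfying T(t) = t e^(T(t)). Then G(t) = sum_{n>=1} (w+n)^(n-1) t^n / n!. -/

import Mathlib

open Finset Polynomial fwdDiff



lemma fwdDiff_zero_fun : ∀ N : ℕ, (Δ_[(1:ℚ)])^[N] (fun _ : ℚ => (0:ℚ)) = fun _ : ℚ => (0:ℚ) := by
  intro N
  induction N with
  | zero => rfl
  | succ N ih2 =>
    rw [Function.iterate_succ_apply]
    have : Δ_[(1:ℚ)] (fun _ : ℚ => (0:ℚ)) = fun _ : ℚ => (0:ℚ) := by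
      funext y; simp [fwdDiff]
    rw [this, ih2]

lemma fwdDiff_poly_eq_zero : ∀ (N : ℕ) (p : Polynomial ℚ), p.natDegree < N →
    (Δ_[(1:ℚ)])^[N] (fun y : ℚ => p.eval y) = fun _ => 0 := by
  intro N
  induction N with
  | zero => intro p hp; exact absurd hp (Nat.not_lt_zero _)
  | succ N ih =>
    intro p hp
    have hstep : Δ_[(1:ℚ)] (fun y : ℚ => p.eval y)
        = fun y : ℚ => (p.comp (X + 1) - p).eval y := by
      funext y
      simp [fwdDiff, eval_comp]
    rw [Function.iterate_succ_apply, hstep]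
    by_cases h0 : p.natDegree = 0
    · obtain ⟨a, rfl⟩ := natDegree_eq_zero.mp h0
      have h1 : (C a).comp (X + 1) - C a = 0 := by simp
      rw [h1]
      have h2 : (fun y : ℚ => (0 : ℚ[X]).eval y) = fun _ : ℚ => (0:ℚ) := by funext y; simp
      rw [h2]
      exact fwdDiff_zero_fun N
    · have hp0 : p ≠ 0 := fun h => h0 (by simp [h])
      have hN : 1 ≤ N := by
        have := Nat.pos_of_ne_zero h0
        omega
      by_cases hq : p.comp (X + 1) - p = 0
      · rw [hq]
        have h2 : (fun y : ℚ => (0 : ℚ[X]).eval y) = fun _ : ℚ => (0:ℚ) := by funext y; simp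
        rw [h2]
        have h3 := ih 0 (by simp only [natDegree_zero]; omega)
        simpa using h3
      · apply ih
        have hX1 : (X + 1 : ℚ[X]).natDegree = 1 := by
          simpa using natDegree_X_add_C (1 : ℚ)
        have hnd : (p.comp (X + 1)).natDegree = p.natDegree := by
          rw [natDegree_comp, hX1, mul_one]
        have hlc : (p.comp (X + 1)).leadingCoeff = p.leadingCoeff := by
          rw [leadingCoeff_comp (by rw [hX1]; exact one_ne_zero)]
          have hl1 : (X + 1 : ℚ[X]).leadingCoeff = 1 := by
            simpa using (monic_X_add_C (1:ℚ)).leadingCoeff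
          rw [hl1, one_pow, mul_one]
        have hc0 : p.comp (X + 1) ≠ 0 := by
          intro h
          apply hp0
          have : p.leadingCoeff = 0 := by rw [← hlc, h, leadingCoeff_zero]
          exact leadingCoeff_eq_zero.mp this
        have hdeg : (p.comp (X + 1)).degree = p.degree := by
          rw [degree_eq_natDegree hc0, degree_eq_natDegree hp0, hnd]
        have := degree_sub_lt hdeg hc0 hlc
        have hlt : (p.comp (X + 1) - p).natDegree < p.natDegree :=
          natDegree_lt_natDegree hq (this.trans_eq hdeg)
        omega


lemma alt_sum_pow_eq_zero (N e : ℕ) (he : e < N) (x : ℚ) :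
    ∑ k ∈ range (N + 1), (-1 : ℚ) ^ (N - k) * (N.choose k : ℚ) * (x + k) ^ e = 0 := by
  have hp : ((X : ℚ[X]) ^ e).natDegree < N := by
    simpa [natDegree_X_pow] using he
  have h0 := fwdDiff_poly_eq_zero N (X ^ e) hp
  have h1 := fwdDiff_iter_eq_sum_shift (1:ℚ) (fun y : ℚ => ((X:ℚ[X]) ^ e).eval y) N x
  rw [h0] at h1
  have h2 : ∀ k : ℕ, ((-1 : ℤ) ^ (N - k) * (N.choose k : ℤ)) • ((X:ℚ[X]) ^ e).eval (x + k • (1:ℚ))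
      = (-1 : ℚ) ^ (N - k) * (N.choose k : ℚ) * (x + k) ^ e := by
    intro k
    rw [zsmul_eq_mul]
    push_cast
    simp [eval_pow]
  calc ∑ k ∈ range (N + 1), (-1 : ℚ) ^ (N - k) * (N.choose k : ℚ) * (x + k) ^ e
      = ∑ k ∈ range (N + 1), ((-1 : ℤ) ^ (N - k) * (N.choose k : ℤ)) •
          ((X:ℚ[X]) ^ e).eval (x + k • (1:ℚ)) := by
        exact Finset.sum_congr rfl fun k _ => (h2 k).symm
    _ = 0 := h1.symm


/-- `abelA k x = x (x+k)^{k-1}` for `k ≥ 1`, and `1` for `k = 0`. -/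
def abelA : ℕ → ℚ → ℚ
  | 0, _ => 1
  | (k+1), x => x * (x + ((k:ℕ)+1)) ^ k

lemma abelA_zero (x : ℚ) : abelA 0 x = 1 := rfl

lemma abelA_mul_pow {k m : ℕ} (hk : k ≤ m) (hm : 1 ≤ m) (x : ℚ) :
    abelA k x * (x + (k : ℚ)) ^ (m - k) = x * (x + (k : ℚ)) ^ (m - 1) := by
  match k with
  | 0 =>
    simp only [abelA, one_mul, Nat.cast_zero, add_zero, Nat.sub_zero]
    conv_lhs => rw [show m = (m - 1) + 1 from by omega]
    rw [pow_succ']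
  | (j+1) =>
    show x * (x + (((j:ℕ)+1) : ℚ)) ^ j * (x + ((j+1 : ℕ) : ℚ)) ^ (m - (j+1)) = _
    push_cast
    rw [mul_assoc, ← pow_add]
    congr 2
    omega

lemma choose_mul_sub (n k : ℕ) :
    (n+1).choose k * (n+1-k) = (n+1) * n.choose k :=
  calc (n+1).choose k * (n+1-k) = (n+1).choose (k+1) * (k+1) :=
        (Nat.choose_succ_right_eq (n+1) k).symm
    _ = (n+1) * n.choose k := (Nat.add_one_mul_choose_eq n k).symm

/-- The Abel sum as a polynomial in `y`. -/
noncomputable def abelLHS (n : ℕ) (x : ℚ) : Polynomial ℚ :=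
  ∑ k ∈ range (n+1), C ((n.choose k : ℚ) * abelA k x) * (X + C ((n - k : ℕ) : ℚ)) ^ (n - k)

theorem abelPoly (n : ℕ) (x : ℚ) : abelLHS n x = (X + C (x + n)) ^ n := by
  induction n with
  | zero => simp [abelLHS, abelA]
  | succ n ih =>
    -- the shifted form of the inductive hypothesis
    have hshift : ∑ k ∈ range (n+1), C ((n.choose k : ℚ) * abelA k x)
          * (X + C (((n - k : ℕ) : ℚ) + 1)) ^ (n - k)
        = (X + C (x + (n:ℚ) + 1)) ^ n := by
      have h := congrArg (aeval (X + 1 : ℚ[X])) ih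
      rw [abelLHS, map_sum] at h
      simp only [map_mul, map_pow, map_add, aeval_C, aeval_X, Polynomial.algebraMap_eq] at h
      have hbase : (X + 1 + (C x + C (n:ℚ)) : ℚ[X]) = X + C (x + (n:ℚ) + 1) := by
        simp only [C_add, C_1]; ring
      calc ∑ k ∈ range (n+1), C ((n.choose k : ℚ) * abelA k x)
            * (X + C (((n - k : ℕ) : ℚ) + 1)) ^ (n - k)
          = ∑ k ∈ range (n+1), C ((n.choose k : ℚ)) * C (abelA k x)
            * (X + 1 + C (((n - k : ℕ) : ℚ))) ^ (n - k) := by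
            refine Finset.sum_congr rfl fun k _ => ?_
            have hb2 : (X + C (((n - k : ℕ) : ℚ) + 1) : ℚ[X])
                = X + 1 + C (((n - k : ℕ) : ℚ)) := by
              simp only [C_add, C_1]; ring
            rw [C_mul, hb2]
        _ = (X + 1 + (C x + C (n:ℚ))) ^ n := h
        _ = (X + C (x + (n:ℚ) + 1)) ^ n := by rw [hbase]
    have hder : derivative (abelLHS (n+1) x)
        = derivative ((X + C (x + ((n+1:ℕ):ℚ))) ^ (n+1)) := by
      rw [abelLHS, derivative_sum]
      have hterm : ∀ k ∈ range (n+2),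
          derivative (C (((n+1).choose k : ℚ) * abelA k x)
            * (X + C (((n+1) - k : ℕ) : ℚ)) ^ ((n+1) - k))
          = C (((n+1:ℕ):ℚ)) * (C ((n.choose k : ℚ) * abelA k x)
            * (X + C (((n - k : ℕ) : ℚ) + 1)) ^ (n - k)) := by
        intro k hk
        rw [mem_range] at hk
        rcases Nat.lt_or_ge k (n+1) with hkn | hkn
        · -- k ≤ n
          rw [derivative_C_mul, derivative_pow, derivative_add, derivative_X, derivative_C,
            add_zero, mul_one]
          have e4 : n + 1 - k = (n - k) + 1 := by omega
          rw [e4, Nat.add_sub_cancel, Nat.cast_add, Nat.cast_one]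
          have e3 : (((n+1).choose k : ℚ)) * (((n-k:ℕ):ℚ) + 1)
              = (((n+1):ℕ) : ℚ) * ((n.choose k : ℚ)) := by
            have h5 := choose_mul_sub n k
            rw [e4] at h5
            exact_mod_cast congrArg (fun t : ℕ => (t : ℚ)) h5
          have e5 : C (((n+1).choose k : ℚ) * abelA k x) * C (((n-k:ℕ):ℚ) + 1)
              = C (((n+1:ℕ):ℚ)) * C ((n.choose k : ℚ) * abelA k x) := by
            rw [← map_mul, ← map_mul]
            congr 1
            linear_combination abelA k x * e3
          rw [← mul_assoc, e5, mul_assoc]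
        · -- k = n+1 : both sides are zero
          have hk1 : k = n + 1 := by omega
          subst hk1
          rw [Nat.sub_self]
          simp [Nat.choose_succ_self]
      have hsplit : ∑ k ∈ range (n+2), C (((n+1:ℕ):ℚ)) * (C ((n.choose k : ℚ) * abelA k x)
            * (X + C (((n - k : ℕ) : ℚ) + 1)) ^ (n - k))
          = C (((n+1:ℕ):ℚ)) * ∑ k ∈ range (n+1), C ((n.choose k : ℚ) * abelA k x)
            * (X + C (((n - k : ℕ) : ℚ) + 1)) ^ (n - k) := by
        rw [Finset.sum_range_succ, Nat.choose_succ_self]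
        simp [Finset.mul_sum]
      rw [Finset.sum_congr rfl hterm, hsplit, hshift]
      rw [derivative_pow, derivative_add, derivative_X, derivative_C, add_zero, mul_one]
      push_cast
      ring
    -- conclude equality from equal derivatives and agreement at a point
    have hd0 : derivative (abelLHS (n+1) x - (X + C (x + ((n+1:ℕ):ℚ))) ^ (n+1)) = 0 := by
      rw [map_sub, hder, sub_self]
    have hC := eq_C_of_derivative_eq_zero hd0
    set y0 : ℚ := -(x + ((n+1:ℕ):ℚ)) with hy0
    have hevalR : ((X + C (x + ((n+1:ℕ):ℚ))) ^ (n+1)).eval y0 = 0 := by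
      rw [eval_pow, eval_add, eval_X, eval_C, hy0, neg_add_cancel, zero_pow (by omega)]
    have hevalL : (abelLHS (n+1) x).eval y0 = 0 := by
      rw [abelLHS, eval_finset_sum]
      have hterm2 : ∀ k ∈ range (n+2),
          (C (((n+1).choose k : ℚ) * abelA k x)
            * (X + C (((n+1) - k : ℕ) : ℚ)) ^ ((n+1) - k)).eval y0
          = x * ((-1:ℚ) ^ ((n+1) - k) * (((n+1).choose k : ℚ)) * (x + (k:ℚ)) ^ n) := by
        intro k hk
        rw [mem_range] at hk
        rw [eval_mul, eval_C, eval_pow, eval_add, eval_X, eval_C]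
        have hc : (((n+1) - k : ℕ) : ℚ) = ((n+1 : ℕ) : ℚ) - (k : ℚ) := by
          rw [Nat.cast_sub (by omega)]
        have hb : y0 + (((n+1) - k : ℕ) : ℚ) = -(x + (k:ℚ)) := by
          rw [hc, hy0]; ring
        rw [hb, neg_pow]
        have habel := abelA_mul_pow (k := k) (m := n+1) (by omega) (by omega) x
        rw [Nat.add_sub_cancel] at habel
        linear_combination ((-1:ℚ) ^ ((n+1) - k) * (((n+1).choose k : ℚ))) * habel
      rw [Finset.sum_congr rfl hterm2, ← Finset.mul_sum,
        alt_sum_pow_eq_zero (n+1) n (by omega) x, mul_zero]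
    have hc0 : (abelLHS (n+1) x - (X + C (x + ((n+1:ℕ):ℚ))) ^ (n+1)).coeff 0 = 0 := by
      have := congrArg (fun p : ℚ[X] => p.eval y0) hC
      simp only [eval_sub, hevalL, hevalR, eval_C, sub_zero, zero_sub, neg_eq_zero] at this
      simpa using this.symm
    rw [hc0, map_zero] at hC
    exact sub_eq_zero.mp hC


lemma abelQ (n : ℕ) (x y : ℚ) :
    ∑ k ∈ range (n+1), (n.choose k : ℚ) * abelA k x * (y + ((n - k : ℕ) : ℚ)) ^ (n - k)
      = (x + y + (n : ℚ)) ^ n := by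
  have h := congrArg (fun p : ℚ[X] => p.eval y) (abelPoly n x)
  simp only [abelLHS, eval_finset_sum, eval_mul, eval_pow, eval_add, eval_X, eval_C] at h
  calc ∑ k ∈ range (n+1), (n.choose k : ℚ) * abelA k x * (y + ((n - k : ℕ) : ℚ)) ^ (n - k)
      = (y + (x + (n:ℚ))) ^ n := h
    _ = (x + y + (n : ℚ)) ^ n := by ring

lemma abelA_eq (j : ℕ) (y : ℚ) :
    abelA j y = (y + (j:ℚ)) ^ j - (j:ℚ) * (y + (j:ℚ)) ^ (j - 1) := by
  match j with
  | 0 => simp [abelA]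
  | (k+1) =>
    show y * (y + (((k:ℕ)+1) : ℚ)) ^ k = _
    rw [Nat.add_sub_cancel]
    push_cast
    rw [pow_succ]
    ring

lemma abelC (n : ℕ) (hn : 1 ≤ n) (x y : ℚ) :
    ∑ k ∈ range (n+1), (n.choose k : ℚ) * abelA k x * abelA (n-k) y
      = (x + y) * (x + y + (n : ℚ)) ^ (n - 1) := by
  have hsplit : ∑ k ∈ range (n+1), (n.choose k : ℚ) * abelA k x * abelA (n-k) y
      = (∑ k ∈ range (n+1), (n.choose k : ℚ) * abelA k x * (y + ((n-k:ℕ):ℚ)) ^ (n-k))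
        - ∑ k ∈ range (n+1), (n.choose k : ℚ) * abelA k x
            * (((n-k:ℕ):ℚ) * (y + ((n-k:ℕ):ℚ)) ^ (n-k-1)) := by
    rw [← Finset.sum_sub_distrib]
    refine Finset.sum_congr rfl fun k _ => ?_
    rw [abelA_eq (n-k) y]
    ring
  rw [hsplit, abelQ]
  -- now compute the second sum
  have h2 : ∑ k ∈ range (n+1), (n.choose k : ℚ) * abelA k x
      * (((n-k:ℕ):ℚ) * (y + ((n-k:ℕ):ℚ)) ^ (n-k-1))
      = (n:ℚ) * (x + (y+1) + ((n-1:ℕ):ℚ)) ^ (n-1) := by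
    obtain ⟨m, rfl⟩ : ∃ m, n = m + 1 := ⟨n - 1, by omega⟩
    rw [Finset.sum_range_succ, Nat.sub_self]
    simp only [Nat.cast_zero, zero_mul, mul_zero, add_zero, Nat.add_sub_cancel]
    have hterm : ∀ k ∈ range (m+1), ((m+1).choose k : ℚ) * abelA k x
        * (((m+1-k:ℕ):ℚ) * (y + ((m+1-k:ℕ):ℚ)) ^ (m+1-k-1))
        = ((m+1:ℕ):ℚ) * (((m.choose k : ℚ)) * abelA k x * ((y+1) + ((m-k:ℕ):ℚ)) ^ (m-k)) := by
      intro k hk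
      rw [mem_range] at hk
      have e4 : m + 1 - k = (m - k) + 1 := by omega
      have e5 : m + 1 - k - 1 = m - k := by omega
      have e6 : ((m+1-k:ℕ):ℚ) = ((m-k:ℕ):ℚ) + 1 := by rw [e4]; push_cast; ring
      have e3 : (((m+1).choose k : ℚ)) * (((m-k:ℕ):ℚ) + 1) = ((m+1:ℕ):ℚ) * (m.choose k : ℚ) := by
        have h5 : (m+1).choose k * (m+1-k) = (m+1) * m.choose k :=
          calc (m+1).choose k * (m+1-k) = (m+1).choose (k+1) * (k+1) :=
                (Nat.choose_succ_right_eq (m+1) k).symm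
            _ = (m+1) * m.choose k := (Nat.add_one_mul_choose_eq m k).symm
        rw [e4] at h5
        exact_mod_cast congrArg (fun t : ℕ => (t : ℚ)) h5
      rw [e5, e6]
      have e7 : y + (((m-k:ℕ):ℚ) + 1) = (y + 1) + ((m-k:ℕ):ℚ) := by ring
      rw [e7]
      linear_combination abelA k x * ((y+1) + ((m-k:ℕ):ℚ)) ^ (m-k) * e3
    rw [Finset.sum_congr rfl hterm, ← Finset.mul_sum, abelQ m x (y+1)]
  rw [h2]
  have e8 : ((n-1:ℕ):ℚ) = (n:ℚ) - 1 := by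
    rw [Nat.cast_sub hn]; norm_num
  rw [e8]
  have e9 : (x + (y+1) + ((n:ℚ) - 1)) = x + y + (n:ℚ) := by ring
  rw [e9]
  have e10 : (x + y + (n:ℚ)) ^ (n-1) * (x + y + (n:ℚ)) = (x + y + (n:ℚ)) ^ n := by
    rw [← pow_succ, Nat.sub_add_cancel hn]
  rw [← e10]
  ring


noncomputable def treeFun : PowerSeries ℚ :=
  PowerSeries.mk fun n => if n = 0 then 0 else (n : ℚ) ^ (n - 1) / (Nat.factorial n : ℚ)

lemma coeff_treeFun_pow_eq_zero {m n : ℕ} (h : n < m) :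
    PowerSeries.coeff n (treeFun ^ m) = 0 := by
  have hX : (PowerSeries.X : PowerSeries ℚ) ∣ treeFun := by
    rw [PowerSeries.X_dvd_iff]
    simp [treeFun]
  exact (PowerSeries.X_pow_dvd_iff.mp (pow_dvd_pow_of_dvd hX m)) n h

noncomputable def psi (n : ℕ) (u : ℚ) : ℚ :=
  ∑ m ∈ range (n+1), u ^ m / (Nat.factorial m : ℚ) * PowerSeries.coeff n (treeFun ^ m)

lemma psi_zero (u : ℚ) : psi 0 u = 1 := by
  simp [psi]

noncomputable def En (n : ℕ) (u : ℚ) : PowerSeries ℚ :=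
  ∑ m ∈ range (n+1), PowerSeries.C (u ^ m / (Nat.factorial m : ℚ)) * treeFun ^ m

lemma coeff_En {i n : ℕ} (hin : i ≤ n) (u : ℚ) :
    PowerSeries.coeff i (En n u) = psi i u := by
  rw [En, map_sum]
  simp only [PowerSeries.coeff_C_mul]
  rw [psi]
  symm
  apply Finset.sum_subset (Finset.range_subset_range.mpr (by omega))
  intro m hm hnm
  rw [mem_range] at hm hnm
  rw [coeff_treeFun_pow_eq_zero (by omega), mul_zero]

lemma C_mul_pow_mul (a b : ℚ) (s t : ℕ) :
    PowerSeries.C a * treeFun ^ s * (PowerSeries.C b * treeFun ^ t)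
      = PowerSeries.C (a * b) * treeFun ^ (s + t) := by
  rw [map_mul, pow_add]; ring

lemma psi_conv (n : ℕ) (u v : ℚ) :
    psi n (u + v) = ∑ p ∈ Finset.HasAntidiagonal.antidiagonal n, psi p.1 u * psi p.2 v := by
  have h1 : PowerSeries.coeff n (En n u * En n v)
      = ∑ p ∈ Finset.HasAntidiagonal.antidiagonal n, psi p.1 u * psi p.2 v := by
    rw [PowerSeries.coeff_mul]
    refine Finset.sum_congr rfl fun p hp => ?_
    rw [Finset.HasAntidiagonal.mem_antidiagonal] at hp
    rw [coeff_En (by omega), coeff_En (by omega)]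
  have hLHS : PowerSeries.coeff n (En n u * En n v)
      = ∑ a ∈ range (n+1), ∑ b ∈ range (n+1-a),
          u ^ a / (Nat.factorial a : ℚ) * (v ^ b / (Nat.factorial b : ℚ))
            * PowerSeries.coeff n (treeFun ^ (a+b)) := by
    simp only [En]
    rw [Finset.sum_mul_sum, map_sum]
    refine Finset.sum_congr rfl fun a _ => ?_
    rw [map_sum]
    rw [Finset.sum_congr rfl (fun b _ => by
      rw [C_mul_pow_mul, PowerSeries.coeff_C_mul] :
      ∀ b ∈ range (n+1), PowerSeries.coeff n
          (PowerSeries.C (u ^ a / (Nat.factorial a : ℚ)) * treeFun ^ a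
            * (PowerSeries.C (v ^ b / (Nat.factorial b : ℚ)) * treeFun ^ b))
        = u ^ a / (Nat.factorial a : ℚ) * (v ^ b / (Nat.factorial b : ℚ))
            * PowerSeries.coeff n (treeFun ^ (a+b)))]
    symm
    apply Finset.sum_subset (Finset.range_subset_range.mpr (by omega))
    intro b hb hnb
    rw [mem_range] at hb hnb
    rw [coeff_treeFun_pow_eq_zero (by omega), mul_zero]
  have hRHS : psi n (u + v)
      = ∑ m ∈ range (n+1), ∑ j ∈ range (m+1),
          u ^ j * v ^ (m - j) * (m.choose j : ℚ) / (Nat.factorial m : ℚ)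
            * PowerSeries.coeff n (treeFun ^ m) := by
    rw [psi]
    refine Finset.sum_congr rfl fun m _ => ?_
    rw [add_pow, Finset.sum_div, Finset.sum_mul]
  rw [hRHS, ← h1, hLHS]
  rw [Finset.sum_sigma', Finset.sum_sigma']
  refine Finset.sum_nbij' (fun p => ⟨p.2, p.1 - p.2⟩) (fun p => ⟨p.1 + p.2, p.1⟩) ?_ ?_ ?_ ?_ ?_
  · rintro ⟨m, j⟩ hp
    simp only [Finset.mem_sigma, mem_range] at hp ⊢
    omega
  · rintro ⟨a, b⟩ hp
    simp only [Finset.mem_sigma, mem_range] at hp ⊢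
    omega
  · rintro ⟨m, j⟩ hp
    simp only [Finset.mem_sigma, mem_range] at hp
    dsimp only
    rw [show j + (m - j) = m from by omega]
  · rintro ⟨a, b⟩ hp
    simp only [Finset.mem_sigma, mem_range] at hp
    dsimp only
    rw [show a + b - a = b from by omega]
  · rintro ⟨m, j⟩ hp
    simp only [Finset.mem_sigma, mem_range] at hp
    simp only
    have hjm : j ≤ m := by omega
    have e1 : j + (m - j) = m := by omega
    rw [e1]
    have hfac : ((m.choose j : ℚ)) * (Nat.factorial j : ℚ) * (Nat.factorial (m-j) : ℚ)
        = (Nat.factorial m : ℚ) := by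
      exact_mod_cast congrArg (fun t : ℕ => (t : ℚ))
        (Nat.choose_mul_factorial_mul_factorial hjm)
    have hj0 : (Nat.factorial j : ℚ) ≠ 0 := Nat.cast_ne_zero.mpr (Nat.factorial_ne_zero j)
    have hmj0 : (Nat.factorial (m-j) : ℚ) ≠ 0 := Nat.cast_ne_zero.mpr (Nat.factorial_ne_zero _)
    have hm0 : (Nat.factorial m : ℚ) ≠ 0 := Nat.cast_ne_zero.mpr (Nat.factorial_ne_zero m)
    field_simp
    linear_combination (u ^ j * v ^ (m - j) * PowerSeries.coeff n (treeFun ^ m)) * hfac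



lemma abelA_pos {n : ℕ} (hn : 1 ≤ n) (x : ℚ) :
    abelA n x = x * (x + (n:ℚ)) ^ (n-1) := by
  match n, hn with
  | (k+1), _ =>
    show x * (x + ((k:ℕ)+1)) ^ k = _
    rw [Nat.add_sub_cancel]
    push_cast
    ring

theorem psi_closed : ∀ (n : ℕ), 1 ≤ n → ∀ u : ℚ,
    psi n u = abelA n u / (Nat.factorial n : ℚ) := by
  intro n
  induction n using Nat.strong_induction_on with
  | _ n IH =>
    intro hn u0
    have hn0 : (Nat.factorial n : ℚ) ≠ 0 := Nat.cast_ne_zero.mpr (Nat.factorial_ne_zero n)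
    -- functional equation
    have hfe : ∀ u v : ℚ, psi n (u+v)
        = (∑ i ∈ range (n-1), psi (i+1) u * psi (n-(i+1)) v) + psi n u + psi n v := by
      intro u v
      rw [psi_conv, Finset.Nat.sum_antidiagonal_eq_sum_range_succ_mk]
      rw [Finset.sum_range_succ']
      have hn' : n = (n-1) + 1 := by omega
      rw [hn', Finset.sum_range_succ, ← hn']
      simp only [Nat.sub_self, Nat.sub_zero]
      rw [psi_zero, psi_zero]
      have : ∀ i ∈ range (n-1), psi (i+1) u * psi (n - (i+1)) v
          = psi (i+1) u * psi (n-1-i) v := by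
        intro i hi
        rw [mem_range] at hi
        congr 2
        omega
      rw [Finset.sum_congr rfl this]
      have : ∀ i ∈ range (n-1), psi (i+1) u * psi (n-1-i) v
          = psi (i+1) u * psi (n - (i+1)) v := by
        intro i hi
        rw [mem_range] at hi
        congr 2
        omega
      rw [Finset.sum_congr rfl this]
      ring
    -- the middle sum in closed form
    have hmid : ∀ u v : ℚ, (∑ i ∈ range (n-1), psi (i+1) u * psi (n-(i+1)) v)
        = ((u+v) * (u+v+(n:ℚ))^(n-1) - abelA n u - abelA n v) / (Nat.factorial n : ℚ) := by
      intro u v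
      have habel := abelC n hn u v
      -- peel off k = 0 and k = n from abelC
      rw [Finset.sum_range_succ'] at habel
      have hn' : n = (n-1) + 1 := by omega
      rw [hn', Finset.sum_range_succ, ← hn'] at habel
      simp only [Nat.sub_self, Nat.sub_zero, Nat.choose_self, Nat.choose_zero_right,
        Nat.cast_one, one_mul, mul_one] at habel
      have hA0u : abelA 0 u = 1 := rfl
      have hA0v : abelA 0 v = 1 := rfl
      rw [hA0u, hA0v, mul_one, one_mul] at habel
      -- habel : ∑ i in range (n-1), C(n,i+1) * abelA (i+1) u * abelA (n-(i+1)) v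
      --         + abelA n u + abelA n v = (u+v)(u+v+n)^(n-1)
      have hterm : ∀ i ∈ range (n-1), psi (i+1) u * psi (n-(i+1)) v
          = ((n.choose (i+1) : ℚ) * abelA (i+1) u * abelA (n-(i+1)) v)
              / (Nat.factorial n : ℚ) := by
        intro i hi
        rw [mem_range] at hi
        have h1 : psi (i+1) u = abelA (i+1) u / (Nat.factorial (i+1) : ℚ) :=
          IH (i+1) (by omega) (by omega) u
        have h2 : psi (n-(i+1)) v = abelA (n-(i+1)) v / (Nat.factorial (n-(i+1)) : ℚ) :=
          IH (n-(i+1)) (by omega) (by omega) v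
        rw [h1, h2]
        have hfac : ((n.choose (i+1) : ℚ)) * (Nat.factorial (i+1) : ℚ)
            * (Nat.factorial (n-(i+1)) : ℚ) = (Nat.factorial n : ℚ) := by
          exact_mod_cast congrArg (fun t : ℕ => (t : ℚ))
            (Nat.choose_mul_factorial_mul_factorial (show i+1 ≤ n by omega))
        have hi0 : (Nat.factorial (i+1) : ℚ) ≠ 0 := Nat.cast_ne_zero.mpr (Nat.factorial_ne_zero _)
        have hni0 : (Nat.factorial (n-(i+1)) : ℚ) ≠ 0 :=
          Nat.cast_ne_zero.mpr (Nat.factorial_ne_zero _)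
        rw [div_mul_div_comm, div_eq_div_iff (mul_ne_zero hi0 hni0) hn0]
        linear_combination (-(abelA (i+1) u * abelA (n-(i+1)) v)) * hfac
      rw [Finset.sum_congr rfl hterm, ← Finset.sum_div]
      rw [show (∑ i ∈ range (n-1), (n.choose (i+1) : ℚ) * abelA (i+1) u * abelA (n-(i+1)) v)
          = (u+v) * (u+v+(n:ℚ))^(n-1) - abelA n u - abelA n v from by linear_combination habel]
    -- additivity of the defect
    set D : ℚ → ℚ := fun u => psi n u - abelA n u / (Nat.factorial n : ℚ) with hD
    have hadd : ∀ u v : ℚ, D (u + v) = D u + D v := by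
      intro u v
      simp only [hD]
      rw [hfe u v, hmid u v, abelA_pos hn (u+v)]
      field_simp
      ring
    have hlin : ∀ q : ℚ, D q = q * D 1 := by
      intro q
      have hf : ∀ q : ℚ, (AddMonoidHom.mk' D hadd) q = D q := fun _ => rfl
      have := map_rat_smul (AddMonoidHom.mk' D hadd) q 1
      simpa [smul_eq_mul] using this
    -- identify the linear coefficient via polynomial coefficients
    set c : ℚ := D 1 with hc
    have hpoly : (∑ m ∈ range (n+1),
          C (PowerSeries.coeff n (treeFun ^ m) / (Nat.factorial m : ℚ)) * X ^ m)
        = C ((Nat.factorial n : ℚ)⁻¹) * (X * (X + C (n:ℚ)) ^ (n-1)) + C c * X := by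
      apply Polynomial.funext
      intro q
      rw [eval_finset_sum]
      simp only [eval_mul, eval_add, eval_pow, eval_C, eval_X]
      have h1 : ∑ m ∈ range (n+1),
          PowerSeries.coeff n (treeFun ^ m) / (Nat.factorial m : ℚ) * q ^ m = psi n q := by
        rw [psi]
        exact Finset.sum_congr rfl fun m _ => by ring
      rw [h1]
      have h2 := hlin q
      simp only [hD] at h2
      rw [abelA_pos hn q] at h2
      have h3 : psi n q = q * (q + (n:ℚ))^(n-1) / (Nat.factorial n : ℚ) + q * c := by
        linear_combination h2
      rw [h3, div_eq_mul_inv]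
      ring
    have hcoeff1 := congrArg (fun p : ℚ[X] => p.coeff 1) hpoly
    simp only [Polynomial.finset_sum_coeff, Polynomial.coeff_C_mul, Polynomial.coeff_X_pow,
      Polynomial.coeff_add] at hcoeff1
    have h4 : ∑ m ∈ range (n+1),
        PowerSeries.coeff n (treeFun ^ m) / (Nat.factorial m : ℚ)
          * (if 1 = m then (1:ℚ) else 0)
        = PowerSeries.coeff n (treeFun ^ 1) / (Nat.factorial 1 : ℚ) := by
      rw [Finset.sum_eq_single 1]
      · simp
      · intro b _ hb
        simp [Ne.symm hb]
      · intro h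
        rw [mem_range] at h
        omega
    rw [h4] at hcoeff1
    have h5 : (X * (X + C (n:ℚ)) ^ (n-1)).coeff 1 = ((X + C (n:ℚ)) ^ (n-1)).coeff 0 := by
      rw [show (1:ℕ) = 0 + 1 from rfl, Polynomial.coeff_X_mul]
    have h6 : ((X + C (n:ℚ)) ^ (n-1)).coeff 0 = (n:ℚ)^(n-1) := by
      rw [Polynomial.coeff_zero_eq_eval_zero]
      simp
    rw [h5, h6, Polynomial.coeff_X_one, mul_one] at hcoeff1
    have h8 : PowerSeries.coeff n (treeFun ^ 1)
        = (n:ℚ)^(n-1) / (Nat.factorial n : ℚ) := by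
      rw [pow_one, treeFun, PowerSeries.coeff_mk, if_neg (by omega)]
    rw [h8] at hcoeff1
    have hc0 : c = 0 := by
      field_simp at hcoeff1
      have hcc : (Nat.factorial n : ℚ) * c = 0 := by
        simp only [Nat.factorial_one, Nat.cast_one, one_mul] at hcoeff1; linarith
      exact (mul_eq_zero.mp hcc).resolve_left hn0
    have := hlin u0
    rw [hc0, mul_zero] at this
    simp only [hD] at this
    linarith [this]


/-- The tree function `T(t) = ∑_{n≥1} n^{n-1} t^n/n!`, viewed in `ℚ[w][[t]]`
(its coefficients are the constant polynomials `n^{n-1}/n!`).  It satisfies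
`T = t·e^T`. -/
noncomputable def treeFunW : PowerSeries (Polynomial ℚ) :=
  PowerSeries.mk fun n =>
    if n = 0 then 0 else Polynomial.C ((n : ℚ) ^ (n - 1) / (Nat.factorial n : ℚ))

/-- Let `G(t) = (e^{wT(t)} - 1)/w := ∑_{m≥1} w^{m-1} T(t)^m / m!` in
`ℚ[w][[t]]`, where `T` is the tree function.  Then
`G(t) = ∑_{n≥1} (w+n)^{n-1} t^n/n!`; i.e., for every `n ≥ 1`, the `n`-th
coefficient `∑_{m=1}^n w^{m-1}·[t^n](T^m)/m!` of `G` (the sum may be truncated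
at `m = n` since `[t^n](T^m) = 0` for `m > n`) equals `(w+n)^{n-1}/n!`. -/
theorem expWT_coeff (n : ℕ) (hn : 1 ≤ n) :
    ∑ m ∈ Finset.Icc 1 n,
        (Polynomial.X : Polynomial ℚ) ^ (m - 1)
          * Polynomial.C ((Nat.factorial m : ℚ))⁻¹
          * PowerSeries.coeff n (treeFunW ^ m)
      = Polynomial.C ((Nat.factorial n : ℚ))⁻¹
          * ((Polynomial.X : Polynomial ℚ) + Polynomial.C (n : ℚ)) ^ (n - 1) := by
  have hmap : treeFunW = PowerSeries.map (Polynomial.C : ℚ →+* ℚ[X]) treeFun := by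
    ext k
    rw [PowerSeries.coeff_map]
    simp [treeFunW, treeFun, apply_ite (Polynomial.C : ℚ →+* ℚ[X])]
  have hcoeffW : ∀ m : ℕ, PowerSeries.coeff n (treeFunW ^ m)
      = Polynomial.C (PowerSeries.coeff n (treeFun ^ m)) := by
    intro m
    rw [hmap, ← map_pow, PowerSeries.coeff_map]
  have hXne : (Polynomial.X : ℚ[X]) ≠ 0 := Polynomial.X_ne_zero
  apply mul_left_cancel₀ hXne
  apply Polynomial.funext
  intro q
  have hL : Polynomial.eval q ((Polynomial.X : ℚ[X]) * ∑ m ∈ Finset.Icc 1 n,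
        (Polynomial.X : Polynomial ℚ) ^ (m - 1)
          * Polynomial.C ((Nat.factorial m : ℚ))⁻¹
          * PowerSeries.coeff n (treeFunW ^ m)) = psi n q := by
    rw [eval_mul, eval_X, eval_finset_sum]
    have h1 : ∀ m ∈ Finset.Icc 1 n,
        Polynomial.eval q ((Polynomial.X : Polynomial ℚ) ^ (m - 1)
          * Polynomial.C ((Nat.factorial m : ℚ))⁻¹
          * PowerSeries.coeff n (treeFunW ^ m))
        = q ^ (m-1) * (Nat.factorial m : ℚ)⁻¹ * PowerSeries.coeff n (treeFun ^ m) := by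
      intro m _
      rw [hcoeffW m, eval_mul, eval_mul, eval_pow, eval_X, eval_C, eval_C]
    rw [Finset.sum_congr rfl h1, Finset.mul_sum]
    have h2 : ∀ m ∈ Finset.Icc 1 n,
        q * (q ^ (m-1) * (Nat.factorial m : ℚ)⁻¹ * PowerSeries.coeff n (treeFun ^ m))
        = q ^ m / (Nat.factorial m : ℚ) * PowerSeries.coeff n (treeFun ^ m) := by
      intro m hm
      rw [Finset.mem_Icc] at hm
      have : q * q ^ (m-1) = q ^ m := by
        rw [← pow_succ']
        congr 1
        omega
      rw [← mul_assoc, ← mul_assoc, this, div_eq_mul_inv]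
    rw [Finset.sum_congr rfl h2, psi]
    apply Finset.sum_subset
    · intro m hm
      rw [Finset.mem_Icc] at hm
      rw [mem_range]
      omega
    · intro m hm hnm
      rw [mem_range] at hm
      rw [Finset.mem_Icc] at hnm
      have hm0 : m = 0 := by omega
      subst hm0
      have : PowerSeries.coeff n ((treeFun : PowerSeries ℚ) ^ 0) = 0 := by
        rw [pow_zero, PowerSeries.coeff_one, if_neg (by omega)]
      rw [this, mul_zero]
  rw [hL, psi_closed n hn q, abelA_pos hn q]
  rw [eval_mul, eval_X, eval_mul, eval_C, eval_pow, eval_add, eval_X, eval_C]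
  rw [div_eq_mul_inv]
  ring
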